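/- Let g_ℂ^{1,0} be the complex Heisenberg Lie algebra with basis X₁, X₂, X₃ and brackets [X₁,X₂] = [X₂,X₃] = 0, [X₁,X₃] = X₂, and let π = c₁ X₁∧X₂ + c₂ X₁∧X₃ + c₃ X₂∧X₃ be a left-invariant bivector field on the Iwasawa manifold 𝕀₃ (c₁, c₂, c₃ ∈ ℂ). Then [π, π]_S = 0 if and only if c₂ = 0; and for such π the induced Koszul–Brylinski operator ∂_π vanishes on left-invariant forms, the Dolbeault–Koszul–Brylinski spectral sequence of (𝕀₃, π) degenerates at the E₁-page, and H_k(𝕀₃, π) has dimensions 1, 5, 11, 14, 11, 5, 1 for k = 0, 1, 2, 3, 4, 5, 6 respectively. -/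
import Mathlib


/-!
# Holomorphic Poisson structures and Koszul–Brylinski homology of the Iwasawa manifold

Statement 17 of Chen–Chen–Yang–Yang, *Holomorphic Koszul–Brylinski homologies of
Poisson blow-ups* (Section 6.2).

The Iwasawa manifold `𝕀₃ = ℂ³/G₃` is complex parallelisable, and both its Dolbeault
cohomology and (by Lemma 6.2 of the paper) the holomorphic Koszul–Brylinski homology
of any left-invariant holomorphic Poisson structure are computed by the
finite-dimensional double complex `(∧^{•,•} g_ℂ^*, ∂_π, ∂̄)` of left-invariant forms.
We realise this double complex completely concretely: left-invariant forms are
coefficient functions on the monomial basis `w^I ∧ w̄^J` (`I, J ⊆ {1,2,3}`), the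
operators `∂`, `∂̄` are determined by the structure equations
`dw¹ = dw³ = 0`, `dw² = −w¹∧w³` of the complex Heisenberg Lie algebra, the interior
product `ι_π` and the Koszul–Brylinski operator `∂_π = ι_π∂ − ∂ι_π` are built from
them, and the Schouten bracket of left-invariant bivector fields is given by its
formula on decomposables in terms of the Lie bracket.
-/


noncomputable section

open Module

namespace InvForms

variable (m : ℕ)

/-- Indexing of the monomial basis `w^I ∧ w̄^J` of left-invariant forms. -/
abbrev Idx := Finset (Fin m) × Finset (Fin m)

/-- Left-invariant complex forms on the nilmanifold, as coefficient functions on the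
monomial basis `w^I ∧ w̄^J`. -/
abbrev Forms := Idx m → ℂ

/-- `(-1)^{#{a ∈ s | a < k}}`, the Koszul sign of inserting `w^k` in front of `w^s`. -/
def insSign (k : Fin m) (s : Finset (Fin m)) : ℂ := (-1) ^ (s.filter fun a => a < k).card

/-- Contraction with the frame vector field `X_k` (interior product on the
holomorphic part). -/
def iotaX (k : Fin m) : Forms m →ₗ[ℂ] Forms m :=
  (Matrix.of fun st st' : Idx m =>
    if st'.1 = insert k st.1 ∧ k ∉ st.1 ∧ st'.2 = st.2 then insSign m k st.1 else 0).mulVecLin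

/-- The sign of rewriting `w^S ∧ w^T` as `±w^U`; zero unless `S` and `T` are
disjoint with union `U`. -/
def wedgeCoef (S T U : Finset (Fin m)) : ℂ :=
  if Disjoint S T ∧ S ∪ T = U then
    (-1) ^ ((S ×ˢ T).filter fun ab => ab.2 < ab.1).card
  else 0

/-- The left-invariant holomorphic Dolbeault operator `∂` determined by the structure
coefficients `dc` (so that `∂ w^j = ∑_S dc j S • w^S`): on a complex parallelisable
nilmanifold, `∂` acts on the monomial `w^I ∧ w̄^J` through the holomorphic factor as a
derivation. -/
def delOp (dc : Fin m → Finset (Fin m) → ℂ) : Forms m →ₗ[ℂ] Forms m :=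
  (Matrix.of fun st' st : Idx m =>
    if st'.2 = st.2 then
      ∑ j ∈ st.1, insSign m j (st.1.erase j) *
        ∑ S : Finset (Fin m), dc j S * wedgeCoef m S (st.1.erase j) st'.1
    else 0).mulVecLin

/-- The left-invariant antiholomorphic Dolbeault operator `∂̄` determined by the
structure coefficients `dc` (so that `∂̄ w̄^j = ∑_S dc j S • w̄^S`), acting on
`w^I ∧ w̄^J` through the antiholomorphic factor with the Koszul sign `(-1)^{|I|}`. -/
def dbarOp (dc : Fin m → Finset (Fin m) → ℂ) : Forms m →ₗ[ℂ] Forms m :=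
  (Matrix.of fun st' st : Idx m =>
    if st'.1 = st.1 then
      (-1 : ℂ) ^ st.1.card *
        ∑ j ∈ st.2, insSign m j (st.2.erase j) *
          ∑ S : Finset (Fin m), dc j S * wedgeCoef m S (st.2.erase j) st'.2
    else 0).mulVecLin

/-- Contraction `ι_π` with the left-invariant bivector field
`π = ½ ∑_{a,b} B^{ab} X_a ∧ X_b` (`B` antisymmetric). -/
def iotaBiv (B : Fin m → Fin m → ℂ) : Forms m →ₗ[ℂ] Forms m :=
  (2⁻¹ : ℂ) • ∑ a : Fin m, ∑ b : Fin m, B a b • (iotaX m a ∘ₗ iotaX m b)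

/-- The Koszul–Brylinski operator `∂_π = ι_π ∘ ∂ − ∂ ∘ ι_π` on left-invariant
forms. -/
def kbOp (dc : Fin m → Finset (Fin m) → ℂ) (B : Fin m → Fin m → ℂ) :
    Forms m →ₗ[ℂ] Forms m :=
  iotaBiv m B ∘ₗ delOp m dc - delOp m dc ∘ₗ iotaBiv m B

/-- The subspace of left-invariant forms of pure bidegree `(p, q)`. -/
def grade (p q : ℤ) : Submodule ℂ (Forms m) where
  carrier := {f | ∀ st : Idx m, f st ≠ 0 → (st.1.card : ℤ) = p ∧ (st.2.card : ℤ) = q}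
  add_mem' := by
    intro f g hf hg st hst
    by_cases h1 : f st = 0
    · refine hg st ?_
      intro h2
      apply hst
      show f st + g st = 0
      rw [h1, h2, add_zero]
    · exact hf st h1
  zero_mem' := by intro st hst; exact absurd rfl hst
  smul_mem' := by
    intro cc f hf st hst
    refine hf st ?_
    intro h0
    apply hst
    show cc * f st = 0
    rw [h0, mul_zero]

/-- The subspace of left-invariant forms of pure total Koszul–Brylinski degree
`k = m − p + q`. -/
def totalGrade (k : ℤ) : Submodule ℂ (Forms m) where
  carrier := {f | ∀ st : Idx m, f st ≠ 0 → (m : ℤ) - st.1.card + st.2.card = k}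
  add_mem' := by
    intro f g hf hg st hst
    by_cases h1 : f st = 0
    · refine hg st ?_
      intro h2
      apply hst
      show f st + g st = 0
      rw [h1, h2, add_zero]
    · exact hf st h1
  zero_mem' := by intro st hst; exact absurd rfl hst
  smul_mem' := by
    intro cc f hf st hst
    refine hf st ?_
    intro h0
    apply hst
    show cc * f st = 0
    rw [h0, mul_zero]

/-- The dimension of the degree-`k` cohomology of the total complex of the double
complex of left-invariant forms with total differential `D` (for the
Koszul–Brylinski total grading `k = m − p + q`).  For `D = ∂_π + ∂̄` this computes
`dim_ℂ H_k(M, π)` for a complex parallelisable nilmanifold `M`. -/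
def totCohDim (D : Forms m →ₗ[ℂ] Forms m) (k : ℤ) : ℕ :=
  finrank ℂ (↥(totalGrade m k ⊓ LinearMap.ker D) ⧸
    Submodule.comap (totalGrade m k ⊓ LinearMap.ker D).subtype
      (Submodule.map D (totalGrade m (k - 1))))

/-- The invariant Hodge number `h^{p,q}`: the dimension of the `∂̄`-cohomology of
left-invariant forms in bidegree `(p, q)` (by Sakane's theorem this equals the
Dolbeault Hodge number of a complex parallelisable nilmanifold). -/
def hodgeDim (dc : Fin m → Finset (Fin m) → ℂ) (p q : ℤ) : ℕ :=
  finrank ℂ (↥(grade m p q ⊓ LinearMap.ker (dbarOp m dc)) ⧸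
    Submodule.comap (grade m p q ⊓ LinearMap.ker (dbarOp m dc)).subtype
      (Submodule.map (dbarOp m dc) (grade m p (q - 1))))

/-- The `E₁`-degeneracy of the Dolbeault–Koszul–Brylinski spectral sequence of the
nilmanifold with invariant Poisson bivector `B`, expressed by the numerical criterion
`dim_ℂ H_k = ∑_{p-q=m-k} h^{p,q}` for all `0 ≤ k ≤ 2m`. -/
def e1Degenerates (dc : Fin m → Finset (Fin m) → ℂ) (B : Fin m → Fin m → ℂ) : Prop :=
  ∀ k : ℤ, 0 ≤ k → k ≤ 2 * (m : ℤ) →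
    totCohDim m (kbOp m dc B + dbarOp m dc) k =
      ∑ q ∈ Finset.range (m + 1), hodgeDim m dc ((m : ℤ) - k + q) (q : ℤ)

/-- Kronecker delta. -/
def delta (i j : Fin m) : ℂ := if i = j then 1 else 0

/-- The trivector `v ∧ X_b ∧ X_d` evaluated at `(x, y, z)` (as an alternating
3-tensor), where `v = ∑ v^i X_i`. -/
def tri (v : Fin m → ℂ) (b d : Fin m) (x y z : Fin m) : ℂ :=
  Matrix.det !![v x, v y, v z;
                delta m b x, delta m b y, delta m b z;
                delta m d x, delta m d y, delta m d z]

/-- The Schouten bracket `[P, Q]_S` of two left-invariant bivector fields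
`P = ½∑ P^{ab} X_a ∧ X_b`, `Q = ½∑ Q^{cd} X_c ∧ X_d`, evaluated as an alternating
trivector at `(x, y, z)`; here `br a c` gives the coordinates of the Lie bracket
`[X_a, X_c]`, and on decomposables
`[A∧B, C∧D]_S = [A,C]∧B∧D − [A,D]∧B∧C − [B,C]∧A∧D + [B,D]∧A∧C`. -/
def schouten (br : Fin m → Fin m → Fin m → ℂ) (B C : Fin m → Fin m → ℂ)
    (x y z : Fin m) : ℂ :=
  (4⁻¹ : ℂ) * ∑ a : Fin m, ∑ b : Fin m, ∑ c : Fin m, ∑ d : Fin m,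
    B a b * C c d *
      (tri m (br a c) b d x y z - tri m (br a d) b c x y z -
        tri m (br b c) a d x y z + tri m (br b d) a c x y z)


/-- Coordinates of the Lie bracket of the complex Heisenberg Lie algebra
(`heisBracket a c` = the coordinates of `[X_a, X_c]`):
`[X₁,X₂] = [X₂,X₃] = 0`, `[X₁,X₃] = X₂`  (indices are zero-based). -/
def heisBracket : Fin 3 → Fin 3 → Fin 3 → ℂ := fun a c i =>
  if a = 0 ∧ c = 2 ∧ i = 1 then 1
  else if a = 2 ∧ c = 0 ∧ i = 1 then -1
  else 0

/-- Structure coefficients of the (anti)holomorphic differentials on the Iwasawa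
manifold: `dw¹ = dw³ = 0`, `dw² = −w¹∧w³` (zero-based: `∂w^1 = −w^0 ∧ w^2`). -/
def iwasawaDC : Fin 3 → Finset (Fin 3) → ℂ := fun j S =>
  if j = 1 ∧ S = ({0, 2} : Finset (Fin 3)) then -1 else 0

/-- The left-invariant bivector field `π = c₁X₁∧X₂ + c₂X₁∧X₃ + c₃X₂∧X₃` on the
Iwasawa manifold, as an antisymmetric coefficient matrix (`π = ½∑ B^{ab} X_a∧X_b`). -/
def heisBiv (c₁ c₂ c₃ : ℂ) (i j : Fin 3) : ℂ :=
  !![0, c₁, c₂; -c₁, 0, c₃; -c₂, -c₃, 0] i j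

/-! ### Auxiliary machinery -/

/-- Subspace of forms supported on a decidable set of monomial indices. -/
def suppS (P : Idx 3 → Prop) [DecidablePred P] : Submodule ℂ (Forms 3) where
  carrier := {f | ∀ st, ¬ P st → f st = 0}
  add_mem' := by
    intro f g hf hg st hst
    show f st + g st = 0
    rw [hf st hst, hg st hst, add_zero]
  zero_mem' := fun st _ => rfl
  smul_mem' := by
    intro c f hf st hst
    show c * f st = 0
    rw [hf st hst, mul_zero]

lemma mem_suppS {P : Idx 3 → Prop} [DecidablePred P] {f : Forms 3} :
    f ∈ suppS P ↔ ∀ st, ¬ P st → f st = 0 := Iff.rfl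

lemma suppS_mono {P Q : Idx 3 → Prop} [DecidablePred P] [DecidablePred Q]
    (h : ∀ st, P st → Q st) : suppS P ≤ suppS Q := by
  intro f hf st hst
  exact hf st fun hp => hst (h st hp)

lemma suppS_inf {P Q : Idx 3 → Prop} [DecidablePred P] [DecidablePred Q] :
    suppS P ⊓ suppS Q = suppS (fun st => P st ∧ Q st) := by
  apply le_antisymm
  · rintro f ⟨h1, h2⟩ st hst
    by_cases hp : P st
    · exact h2 st fun hq => hst ⟨hp, hq⟩
    · exact h1 st hp
  · intro f hf
    constructor
    · intro st hst; exact hf st fun h => hst h.1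
    · intro st hst; exact hf st fun h => hst h.2

lemma finrank_suppS (P : Idx 3 → Prop) [DecidablePred P] :
    finrank ℂ (suppS P) = (Finset.univ.filter P).card := by
  classical
  let e : suppS P ≃ₗ[ℂ] ({st // P st} → ℂ) :=
    { toFun := fun x s => x.1 s.1
      map_add' := fun x y => rfl
      map_smul' := fun c x => rfl
      invFun := fun g => ⟨fun st => if h : P st then g ⟨st, h⟩ else 0, by
        intro st hst
        exact dif_neg hst⟩
      left_inv := by
        rintro ⟨f, hf⟩
        apply Subtype.ext
        funext st
        by_cases h : P st
        · exact dif_pos h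
        · show (if h : P st then _ else 0) = f st
          rw [dif_neg h, hf st h]
      right_inv := by
        intro g
        funext s
        exact dif_pos s.2 }
  rw [e.finrank_eq, Module.finrank_pi, Fintype.card_subtype]

lemma wedge_empty (S U : Finset (Fin 3)) :
    wedgeCoef 3 S ∅ U = if U = S then 1 else 0 := by
  simp [wedgeCoef, eq_comm]

lemma sum_dc (j : Fin 3) (T U : Finset (Fin 3)) :
    ∑ S : Finset (Fin 3), iwasawaDC j S * wedgeCoef 3 S T U =
      if j = 1 then -wedgeCoef 3 {0, 2} T U else 0 := by
  by_cases hj : j = 1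
  · subst hj
    simp [iwasawaDC, ite_mul, Finset.sum_ite_eq']
  · simp [iwasawaDC, hj]

lemma wedge02_ne (J : Finset (Fin 3)) (U : Finset (Fin 3)) (h1 : (1 : Fin 3) ∈ J)
    (hne : J ≠ {1}) : wedgeCoef 3 {0, 2} (J.erase 1) U = 0 := by
  have : ∃ y ∈ J, y ≠ (1 : Fin 3) := by
    by_contra hc
    push_neg at hc
    exact hne (Finset.eq_singleton_iff_unique_mem.2 ⟨h1, hc⟩)
  obtain ⟨y, hy, hy1⟩ := this
  have hmem : y ∈ ({0, 2} : Finset (Fin 3)) := by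
    fin_cases y <;> simp_all
  have hnd : ¬ Disjoint ({0, 2} : Finset (Fin 3)) (J.erase 1) := by
    intro hd
    exact (Finset.disjoint_left.1 hd hmem) (Finset.mem_erase.2 ⟨hy1, hy⟩)
  rw [wedgeCoef, if_neg (by tauto)]

lemma dbar_apply (f : Forms 3) (st : Idx 3) :
    dbarOp 3 iwasawaDC f st =
      if st.2 = {0, 2} then -((-1) ^ st.1.card * f (st.1, ({1} : Finset (Fin 3)))) else 0 := by
  have : dbarOp 3 iwasawaDC f st = ∑ x : Idx 3,
      (if st.1 = x.1 then
        (-1 : ℂ) ^ x.1.card *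
          ∑ j ∈ x.2, insSign 3 j (x.2.erase j) *
            ∑ S : Finset (Fin 3), iwasawaDC j S * wedgeCoef 3 S (x.2.erase j) st.2
      else 0) * f x := by
    simp [dbarOp, Matrix.mulVecLin_apply, Matrix.mulVec, dotProduct]
  rw [this, Finset.sum_eq_single (st.1, ({1} : Finset (Fin 3)))]
  · simp only [if_pos rfl]
    have h1 : (({1} : Finset (Fin 3)).erase 1) = ∅ := by decide
    rw [Finset.sum_eq_single (1 : Fin 3)]
    · rw [sum_dc, if_pos rfl, h1, wedge_empty, insSign]
      by_cases h : st.2 = {0, 2} <;> simp [h]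
    · intro j hj hj1
      simp_all
    · simp
  · rintro ⟨I, J⟩ - hne
    by_cases hI : st.1 = I
    · subst hI
      have hJ : J ≠ {1} := fun h => hne (by rw [h])
      rw [if_pos rfl]
      by_cases h1 : (1 : Fin 3) ∈ J
      · rw [Finset.sum_eq_single (1 : Fin 3)]
        · rw [sum_dc, if_pos rfl, wedge02_ne J st.2 h1 hJ]
          simp
        · intro j hj hj1
          rw [sum_dc, if_neg hj1, mul_zero]
        · intro h
          exact absurd h1 h
      · rw [Finset.sum_eq_zero, mul_zero, zero_mul]
        intro j hj
        rw [sum_dc, if_neg (fun h : j = 1 => h1 (h ▸ hj)), mul_zero]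
    · rw [if_neg hI, zero_mul]
  · simp

lemma del_apply (f : Forms 3) (st : Idx 3) :
    delOp 3 iwasawaDC f st =
      if st.1 = {0, 2} then -(f (({1} : Finset (Fin 3)), st.2)) else 0 := by
  have : delOp 3 iwasawaDC f st = ∑ x : Idx 3,
      (if st.2 = x.2 then
        ∑ j ∈ x.1, insSign 3 j (x.1.erase j) *
            ∑ S : Finset (Fin 3), iwasawaDC j S * wedgeCoef 3 S (x.1.erase j) st.1
      else 0) * f x := by
    simp [delOp, Matrix.mulVecLin_apply, Matrix.mulVec, dotProduct]
  rw [this, Finset.sum_eq_single ((({1} : Finset (Fin 3)), st.2) : Idx 3)]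
  · rw [if_pos rfl]
    have h1 : (({1} : Finset (Fin 3)).erase 1) = ∅ := by decide
    rw [Finset.sum_eq_single (1 : Fin 3)]
    · rw [sum_dc, if_pos rfl, h1, wedge_empty, insSign]
      by_cases h : st.1 = {0, 2} <;> simp [h]
    · intro j hj hj1
      simp_all
    · simp
  · rintro ⟨I, J⟩ - hne
    by_cases hJ : st.2 = J
    · subst hJ
      have hI : I ≠ {1} := fun h => hne (by rw [h])
      rw [if_pos rfl]
      by_cases h1 : (1 : Fin 3) ∈ I
      · rw [Finset.sum_eq_single (1 : Fin 3)]
        · rw [sum_dc, if_pos rfl, wedge02_ne I st.1 h1 hI]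
          simp
        · intro j hj hj1
          rw [sum_dc, if_neg hj1, mul_zero]
        · intro h
          exact absurd h1 h
      · rw [Finset.sum_eq_zero, zero_mul]
        intro j hj
        rw [sum_dc, if_neg (fun h : j = 1 => h1 (h ▸ hj)), mul_zero]
    · rw [if_neg hJ, zero_mul]
  · simp

lemma iotaX_apply (k : Fin 3) (f : Forms 3) (st : Idx 3) :
    iotaX 3 k f st =
      if k ∈ st.1 then 0 else insSign 3 k st.1 * f (insert k st.1, st.2) := by
  have : iotaX 3 k f st = ∑ x : Idx 3,
      (if x.1 = insert k st.1 ∧ k ∉ st.1 ∧ x.2 = st.2 then insSign 3 k st.1 else 0) * f x := by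
    simp [iotaX, Matrix.mulVecLin_apply, Matrix.mulVec, dotProduct]
  rw [this, Finset.sum_eq_single ((insert k st.1, st.2) : Idx 3)]
  · by_cases h : k ∈ st.1
    · rw [if_neg (by tauto), if_pos h, zero_mul]
    · rw [if_pos ⟨rfl, h, rfl⟩, if_neg h]
  · rintro ⟨I, J⟩ - hne
    rw [if_neg, zero_mul]
    rintro ⟨h1, -, h2⟩
    exact hne (Prod.ext h1 h2)
  · simp

lemma iotaBiv_apply (B : Fin 3 → Fin 3 → ℂ) (f : Forms 3) (st : Idx 3) :
    iotaBiv 3 B f st =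
      (2⁻¹ : ℂ) * ∑ a : Fin 3, ∑ b : Fin 3, B a b * (iotaX 3 a (iotaX 3 b f) st) := by
  simp [iotaBiv, LinearMap.sum_apply, Finset.sum_apply, Finset.mul_sum]

lemma insert1_ne (w : Fin 3) (s : Finset (Fin 3)) :
    (insert (1 : Fin 3) (insert w s) = ({0, 2} : Finset (Fin 3))) = False :=
  eq_false fun h => absurd (h ▸ Finset.mem_insert_self 1 (insert w s)) (by decide)

lemma insert1_ne' (w : Fin 3) (s : Finset (Fin 3)) :
    (insert w (insert (1 : Fin 3) s) = ({0, 2} : Finset (Fin 3))) = False :=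
  eq_false fun h =>
    absurd (h ▸ Finset.mem_insert_of_mem (Finset.mem_insert_self 1 s)) (by decide)

lemma claimA (c₁ c₃ : ℂ) (f : Forms 3) (st : Idx 3) :
    iotaBiv 3 (heisBiv c₁ 0 c₃) (delOp 3 iwasawaDC f) st = 0 := by
  rw [iotaBiv_apply]
  simp only [Fin.sum_univ_three, heisBiv, Matrix.cons_val_zero, Matrix.cons_val_one,
    Matrix.head_cons, Matrix.cons_val_two, Matrix.tail_cons, Matrix.cons_val',
    Matrix.empty_val', Matrix.cons_val_fin_one, Matrix.of_apply, Matrix.vecHead,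
    iotaX_apply, del_apply, insert1_ne, insert1_ne', if_false,
    mul_zero, zero_mul, neg_zero, ite_self, add_zero, zero_add, neg_mul]

lemma claimB (c₁ c₃ : ℂ) (f : Forms 3) (J : Finset (Fin 3)) :
    iotaBiv 3 (heisBiv c₁ 0 c₃) f (({1} : Finset (Fin 3)), J) = 0 := by
  rw [iotaBiv_apply]
  simp only [Fin.sum_univ_three, heisBiv, Matrix.cons_val_zero, Matrix.cons_val_one,
    Matrix.head_cons, Matrix.cons_val_two, Matrix.tail_cons, Matrix.cons_val',
    Matrix.empty_val', Matrix.cons_val_fin_one, Matrix.of_apply, Matrix.vecHead,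
    iotaX_apply,
    show ((1 : Fin 3) ∈ ({1} : Finset (Fin 3))) = True by simp,
    show ((1 : Fin 3) ∈ insert (0 : Fin 3) ({1} : Finset (Fin 3))) = True by simp,
    show ((1 : Fin 3) ∈ insert (2 : Fin 3) ({1} : Finset (Fin 3))) = True by simp,
    show ((0 : Fin 3) ∈ ({1} : Finset (Fin 3))) = False by decide,
    show ((2 : Fin 3) ∈ ({1} : Finset (Fin 3))) = False by decide,
    if_true, if_false, mul_zero, zero_mul, neg_zero, ite_self, add_zero, zero_add]

lemma kb_zero (c₁ c₃ : ℂ) : kbOp 3 iwasawaDC (heisBiv c₁ 0 c₃) = 0 := by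
  apply LinearMap.ext
  intro f
  funext st
  have : kbOp 3 iwasawaDC (heisBiv c₁ 0 c₃) f st =
      iotaBiv 3 (heisBiv c₁ 0 c₃) (delOp 3 iwasawaDC f) st -
        delOp 3 iwasawaDC (iotaBiv 3 (heisBiv c₁ 0 c₃) f) st := by
    simp [kbOp, LinearMap.sub_apply]
  rw [this, claimA, del_apply, claimB]
  simp

lemma totalGrade_eq (k : ℤ) :
    totalGrade 3 k = suppS (fun st => (3 : ℤ) - st.1.card + st.2.card = k) := by
  apply le_antisymm
  · intro f hf st hst
    by_contra h0
    exact hst (hf st h0)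
  · intro f hf st h0
    by_contra hst
    exact h0 (hf st hst)

lemma grade_eq (p q : ℤ) :
    grade 3 p q = suppS (fun st => (st.1.card : ℤ) = p ∧ (st.2.card : ℤ) = q) := by
  apply le_antisymm
  · intro f hf st hst
    by_contra h0
    exact hst (hf st h0)
  · intro f hf st h0
    by_contra hst
    exact h0 (hf st hst)

lemma ker_dbar :
    LinearMap.ker (dbarOp 3 iwasawaDC) = suppS (fun st => st.2 ≠ ({1} : Finset (Fin 3))) := by
  apply le_antisymm
  · intro f hf st hst
    rw [not_not] at hst
    have h0 : dbarOp 3 iwasawaDC f (st.1, ({0, 2} : Finset (Fin 3))) = 0 := by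
      rw [LinearMap.mem_ker] at hf
      rw [hf]
      rfl
    rw [dbar_apply, if_pos rfl, neg_eq_zero] at h0
    have h1 : f (st.1, ({1} : Finset (Fin 3))) = 0 := by
      rcases mul_eq_zero.1 h0 with h | h
      · exact absurd h (pow_ne_zero _ (by norm_num))
      · exact h
    have : st = (st.1, ({1} : Finset (Fin 3))) := Prod.ext rfl hst
    rw [this]
    exact h1
  · intro f hf
    rw [LinearMap.mem_ker]
    funext st
    rw [dbar_apply]
    have h1 : f (st.1, ({1} : Finset (Fin 3))) = 0 := hf _ (by simp)
    rw [h1]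
    simp

lemma map_dbar_supp (Q : Idx 3 → Prop) [DecidablePred Q] :
    Submodule.map (dbarOp 3 iwasawaDC) (suppS Q) =
      suppS (fun st => st.2 = ({0, 2} : Finset (Fin 3)) ∧ Q (st.1, ({1} : Finset (Fin 3)))) := by
  apply le_antisymm
  · rintro g ⟨f, hf, rfl⟩ st hst
    rw [dbar_apply]
    by_cases h : st.2 = {0, 2}
    · rw [if_pos h]
      have hq : ¬ Q (st.1, ({1} : Finset (Fin 3))) := fun hQ => hst ⟨h, hQ⟩
      rw [hf _ hq]
      simp
    · rw [if_neg h]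
  · intro g hg
    refine ⟨fun st => if st.2 = ({1} : Finset (Fin 3)) then
        (-1 : ℂ) ^ (st.1.card + 1) * g (st.1, ({0, 2} : Finset (Fin 3))) else 0, ?_, ?_⟩
    · intro st hst
      dsimp only
      by_cases h2 : st.2 = ({1} : Finset (Fin 3))
      · rw [if_pos h2]
        have hz : g (st.1, ({0, 2} : Finset (Fin 3))) = 0 := by
          apply hg
          rintro ⟨-, hQ⟩
          apply hst
          have he : st = (st.1, ({1} : Finset (Fin 3))) := Prod.ext rfl h2
          rw [he]
          exact hQ
        rw [hz, mul_zero]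
      · rw [if_neg h2]
    · funext st
      rw [dbar_apply]
      by_cases h : st.2 = {0, 2}
      · rw [if_pos h, if_pos rfl]
        have hsign : (-1 : ℂ) ^ st.1.card * ((-1 : ℂ) ^ (st.1.card + 1) *
            g (st.1, ({0, 2} : Finset (Fin 3)))) = -g (st.1, ({0, 2} : Finset (Fin 3))) := by
          rw [← mul_assoc, ← pow_add]
          have : st.1.card + (st.1.card + 1) = 2 * st.1.card + 1 := by ring
          rw [this, pow_succ, pow_mul]
          norm_num
        rw [hsign, neg_neg]
        have : st = (st.1, ({0, 2} : Finset (Fin 3))) := Prod.ext rfl h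
        rw [← this]
      · rw [if_neg h]
        symm
        apply hg
        intro hc
        exact h hc.1

set_option synthInstance.maxHeartbeats 1000000 in
set_option maxHeartbeats 1000000 in
lemma quot_dim (W U : Submodule ℂ (Forms 3)) (P T : Idx 3 → Prop)
    [DecidablePred P] [DecidablePred T]
    (hW : W = suppS P) (hU : U = suppS T) (hle : ∀ st, T st → P st) :
    finrank ℂ (↥W ⧸ Submodule.comap W.subtype U) =
      (Finset.univ.filter P).card - (Finset.univ.filter T).card := by
  subst hW hU
  have hle' : suppS T ≤ suppS P := suppS_mono hle
  have e := Submodule.comapSubtypeEquivOfLe hle'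
  have h1 : finrank ℂ (Submodule.comap (suppS P).subtype (suppS T)) = finrank ℂ (suppS T) :=
    e.finrank_eq
  have h2 := Submodule.finrank_quotient_add_finrank
    (Submodule.comap (suppS P).subtype (suppS T))
  rw [h1, finrank_suppS, finrank_suppS] at h2
  omega

lemma totCoh_eq (k : ℤ) :
    totCohDim 3 (dbarOp 3 iwasawaDC) k =
      (Finset.univ.filter fun st : Idx 3 =>
        ((3 : ℤ) - st.1.card + st.2.card = k) ∧ st.2 ≠ ({1} : Finset (Fin 3))).card -
      (Finset.univ.filter fun st : Idx 3 =>
        st.2 = ({0, 2} : Finset (Fin 3)) ∧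
          (3 : ℤ) - st.1.card + (({1} : Finset (Fin 3)).card : ℤ) = k - 1).card := by
  unfold totCohDim
  apply quot_dim
  · rw [totalGrade_eq, ker_dbar, suppS_inf]
  · rw [totalGrade_eq, map_dbar_supp]
  · rintro st ⟨h1, h2⟩
    have hc : (st.2.card : ℤ) = 2 := by rw [h1]; decide
    constructor
    · have hc1 : (({1} : Finset (Fin 3)).card : ℤ) = 1 := by decide
      rw [hc1] at h2
      omega
    · rw [h1]; decide

lemma hodge_eq (p q : ℤ) :
    hodgeDim 3 iwasawaDC p q =
      (Finset.univ.filter fun st : Idx 3 =>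
        ((st.1.card : ℤ) = p ∧ (st.2.card : ℤ) = q) ∧ st.2 ≠ ({1} : Finset (Fin 3))).card -
      (Finset.univ.filter fun st : Idx 3 =>
        st.2 = ({0, 2} : Finset (Fin 3)) ∧
          (st.1.card : ℤ) = p ∧ ((({1} : Finset (Fin 3)).card : ℤ)) = q - 1).card := by
  unfold hodgeDim
  apply quot_dim
  · rw [grade_eq, ker_dbar, suppS_inf]
  · rw [grade_eq, map_dbar_supp]
  · rintro st ⟨h1, h2, h3⟩
    have hc : (st.2.card : ℤ) = 2 := by rw [h1]; decide
    have hc1 : (({1} : Finset (Fin 3)).card : ℤ) = 1 := by decide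
    rw [hc1] at h3
    refine ⟨⟨h2, by omega⟩, by rw [h1]; decide⟩

example : totCohDim 3 (dbarOp 3 iwasawaDC) 2 = 11 := by
  rw [totCoh_eq]
  decide

set_option maxHeartbeats 2000000 in
lemma schouten_backward (c₁ c₃ : ℂ) (x y z : Fin 3) :
    schouten 3 heisBracket (heisBiv c₁ 0 c₃) (heisBiv c₁ 0 c₃) x y z = 0 := by
  simp only [schouten, heisBracket, heisBiv, tri, delta, Fin.sum_univ_three,
    Matrix.det_fin_three, Matrix.cons_val_zero, Matrix.cons_val_one, Matrix.head_cons,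
    Matrix.cons_val_two, Matrix.tail_cons, Matrix.cons_val', Matrix.empty_val',
    Matrix.cons_val_fin_one, Matrix.of_apply, Fin.isValue, Matrix.vecHead, Matrix.vecTail,
    zero_mul, mul_zero, neg_zero, zero_add, add_zero, neg_mul, mul_neg, neg_neg,
    show ((0:Fin 3) = 0) = True by simp, show ((1:Fin 3) = 0) = False by decide,
    show ((2:Fin 3) = 0) = False by decide, show ((0:Fin 3) = 1) = False by decide,
    show ((1:Fin 3) = 1) = True by simp, show ((2:Fin 3) = 1) = False by decide,
    show ((0:Fin 3) = 2) = False by decide, show ((1:Fin 3) = 2) = False by decide,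
    show ((2:Fin 3) = 2) = True by simp,
    true_and, false_and, and_true, and_false, if_true, if_false, ite_true, ite_false]
  fin_cases x <;> fin_cases y <;> fin_cases z <;> norm_num

set_option maxHeartbeats 2000000 in
lemma schouten_forward (c₁ c₂ c₃ : ℂ)
    (h : schouten 3 heisBracket (heisBiv c₁ c₂ c₃) (heisBiv c₁ c₂ c₃) 0 1 2 = 0) :
    c₂ = 0 := by
  simp only [schouten, heisBracket, heisBiv, tri, delta, Fin.sum_univ_three,
    Matrix.det_fin_three, Matrix.cons_val_zero, Matrix.cons_val_one, Matrix.head_cons,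
    Matrix.cons_val_two, Matrix.tail_cons, Matrix.cons_val', Matrix.empty_val',
    Matrix.cons_val_fin_one, Matrix.of_apply, Fin.isValue, Matrix.vecHead, Matrix.vecTail,
    show ((0:Fin 3) = 0) = True by simp, show ((1:Fin 3) = 0) = False by decide,
    show ((2:Fin 3) = 0) = False by decide, show ((0:Fin 3) = 1) = False by decide,
    show ((1:Fin 3) = 1) = True by simp, show ((2:Fin 3) = 1) = False by decide,
    show ((0:Fin 3) = 2) = False by decide, show ((1:Fin 3) = 2) = False by decide,
    show ((2:Fin 3) = 2) = True by simp,
    true_and, false_and, and_true, and_false, if_true, if_false, ite_true, ite_false] at h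
  norm_num at h
  exact h

/-- **Poisson structures and Koszul–Brylinski homology of the Iwasawa manifold**
(Section 6.2): for `π = c₁X₁∧X₂ + c₂X₁∧X₃ + c₃X₂∧X₃` a left-invariant bivector field
on the Iwasawa manifold `𝕀₃`, one has `[π, π]_S = 0` if and only if `c₂ = 0`; and
for such `π` the Koszul–Brylinski operator `∂_π` vanishes on left-invariant forms,
the Dolbeault–Koszul–Brylinski spectral sequence of `(𝕀₃, π)` degenerates at the
`E₁`-page, and the holomorphic Koszul–Brylinski homology `H_k(𝕀₃, π)` (computed by
the total cohomology of the invariant double complex) has dimensions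
`1, 5, 11, 14, 11, 5, 1` for `k = 0, …, 6`. -/
theorem iwasawa_poisson_kb (c₁ c₂ c₃ : ℂ) :
    ((∀ x y z : Fin 3,
        schouten 3 heisBracket (heisBiv c₁ c₂ c₃) (heisBiv c₁ c₂ c₃) x y z = 0) ↔
      c₂ = 0) ∧
    (c₂ = 0 →
      kbOp 3 iwasawaDC (heisBiv c₁ c₂ c₃) = 0 ∧
      e1Degenerates 3 iwasawaDC (heisBiv c₁ c₂ c₃) ∧
      ∀ k : Fin 7,
        totCohDim 3 (kbOp 3 iwasawaDC (heisBiv c₁ c₂ c₃) + dbarOp 3 iwasawaDC)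
          ((k : ℕ) : ℤ) = ![1, 5, 11, 14, 11, 5, 1] k) := by
  constructor
  · constructor
    · intro h
      exact schouten_forward c₁ c₂ c₃ (h 0 1 2)
    · rintro rfl x y z
      exact schouten_backward c₁ c₃ x y z
  · rintro rfl
    refine ⟨kb_zero c₁ c₃, ?_, ?_⟩
    · intro k h0 h1
      rw [kb_zero c₁ c₃, zero_add]
      have h6 : k ≤ 6 := by omega
      interval_cases k <;>
      · rw [totCoh_eq]
        simp only [Finset.sum_range_succ, Finset.sum_range_zero, hodge_eq]
        decide
    · intro k
      rw [kb_zero c₁ c₃, zero_add]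
      fin_cases k <;>
      · rw [totCoh_eq]
        decide

end InvForms
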